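/- arXiv:2403.13159 — 4 statements merged into one kernel-verified Lean document; each statement's English description precedes it below -/
import Mathlib

section
/- Let 2 < p_1 < p_2 < … < p_k be primes and n = p_1 p_2 ⋯ p_k. Then ∏_{l=1}^{k-2} p_l^{2^{k-1-l} - 1} ≤ n^{2^{k-1}/k - 1}. -/
open Finset Real

lemma geom_aux : ∀ m : ℕ, ∑ l ∈ Finset.Icc 1 m, (2:ℝ) ^ (m - l) = 2 ^ m - 1 := by
  intro m
  induction m with
  | zero => simp
  | succ m ih =>
    rw [Finset.sum_Icc_succ_top (by omega)]
    have : ∑ l ∈ Finset.Icc 1 m, (2:ℝ) ^ (m + 1 - l) = 2 * ∑ l ∈ Finset.Icc 1 m, (2:ℝ) ^ (m - l) := by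
      rw [Finset.mul_sum]
      apply Finset.sum_congr rfl
      intro l hl
      simp only [Finset.mem_Icc] at hl
      rw [show m + 1 - l = (m - l) + 1 by omega, pow_succ]
      ring
    rw [this, ih]
    simp
    ring

theorem prod_pow_le_rpow (k : ℕ) (hk : 2 ≤ k) (p : ℕ → ℕ)
    (hprime : ∀ i, 1 ≤ i → i ≤ k → (p i).Prime)
    (h2 : 2 < p 1)
    (hmono : ∀ i j, 1 ≤ i → i < j → j ≤ k → p i < p j)
    (n : ℕ) (hn : n = ∏ i ∈ Finset.Icc 1 k, p i) :
    (∏ l ∈ Finset.Icc 1 (k - 2), ((p l : ℝ) ^ (2 ^ (k - 1 - l) - 1))) ≤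
      (n : ℝ) ^ ((2 ^ (k - 1) : ℝ) / k - 1) := by
  -- setup
  set f : ℕ → ℝ := fun l => (2:ℝ) ^ (k - 1 - l) - 1 with hf
  set g : ℕ → ℝ := fun l => Real.log (p l) with hg
  have hp1 : ∀ i, 1 ≤ i → i ≤ k → 1 < p i := fun i h1 h2 => (hprime i h1 h2).one_lt
  have hnpos : 0 < n := by
    rw [hn]
    apply Finset.prod_pos
    intro i hi
    simp only [Finset.mem_Icc] at hi
    exact (hprime i hi.1 hi.2).pos
  have hlogn : Real.log n = ∑ l ∈ Finset.Icc 1 k, g l := by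
    rw [hn]
    push_cast
    rw [Real.log_prod]
    intro i hi
    simp only [Finset.mem_Icc] at hi
    exact_mod_cast (hprime i hi.1 hi.2).pos.ne'
  -- sum of f
  have hsumf : ∑ l ∈ Finset.Icc 1 k, f l = 2 ^ (k - 1) - k := by
    obtain ⟨m, rfl⟩ : ∃ m, k = m + 1 := ⟨k - 1, by omega⟩
    have hcard : (Finset.Icc 1 (m+1)).card = m + 1 := by simp
    have h1 : ∑ l ∈ Finset.Icc 1 (m+1), f l
        = (∑ l ∈ Finset.Icc 1 (m+1), (2:ℝ) ^ (m - l)) - (m+1) := by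
      simp only [hf]
      rw [Finset.sum_sub_distrib, Finset.sum_const, hcard]
      have h2 : ∑ l ∈ Finset.Icc 1 (m+1), ((2:ℝ) ^ (m + 1 - 1 - l))
          = ∑ l ∈ Finset.Icc 1 (m+1), (2:ℝ) ^ (m - l) :=
        Finset.sum_congr rfl (fun l hl => by norm_num)
      rw [h2]
      simp [nsmul_eq_mul]
    rw [h1, Finset.sum_Icc_succ_top (by omega), geom_aux m,
        show m - (m+1) = 0 by omega]
    push_cast
    norm_num
  -- antivary
  have hanti : AntivaryOn f g (Finset.Icc 1 k) := by
    intro i hi j hj hgij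
    simp only [Finset.coe_Icc, Set.mem_Icc] at hi hj
    have hpij : p i < p j := by
      by_contra hle
      push_neg at hle
      have : g j ≤ g i := by
        apply Real.log_le_log (by exact_mod_cast (hprime j hj.1 hj.2).pos)
        exact_mod_cast hle
      linarith
    have hij : i < j := by
      rcases lt_trichotomy i j with h | h | h
      · exact h
      · exact absurd hpij (by rw [h]; exact lt_irrefl _)
      · exact absurd hpij (not_lt.2 (hmono j i hj.1 h hi.2).le)
    simp only [hf]
    have : k - 1 - j ≤ k - 1 - i := by omega
    have := pow_le_pow_right₀ (by norm_num : (1:ℝ) ≤ 2) this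
    linarith
  -- Chebyshev
  have cheb := hanti.card_mul_sum_le_sum_mul_sum
  have hcard : ((Finset.Icc 1 k).card : ℝ) = k := by
    norm_num [Nat.card_Icc]
  rw [hsumf, ← hlogn, hcard] at cheb
  have hkr : (0:ℝ) < k := by exact_mod_cast (by omega : 0 < k)
  have key : ∑ l ∈ Finset.Icc 1 k, f l * g l ≤ ((2 ^ (k-1) : ℝ) / k - 1) * Real.log n := by
    rw [sub_mul, div_mul_eq_mul_div, one_mul]
    rw [div_sub' hkr.ne', le_div_iff₀ hkr]
    calc (∑ l ∈ Finset.Icc 1 k, f l * g l) * k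
        = (k:ℝ) * ∑ l ∈ Finset.Icc 1 k, f l * g l := by ring
      _ ≤ (2 ^ (k - 1) - k) * Real.log n := cheb
      _ = 2 ^ (k-1) * Real.log n - (k:ℝ) * Real.log n := by ring
  -- the sum over Icc 1 k equals sum over Icc 1 (k-2)
  have hsplit : ∑ l ∈ Finset.Icc 1 k, f l * g l = ∑ l ∈ Finset.Icc 1 (k-2), f l * g l := by
    have h1 : Finset.Icc 1 k = Finset.Ioc 0 k := by rfl
    have h2 : Finset.Icc 1 (k-2) = Finset.Ioc 0 (k-2) := by rfl
    rw [h1, h2, ← Finset.sum_Ioc_consecutive _ (by omega : 0 ≤ k - 2) (by omega : k - 2 ≤ k)]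
    have : ∑ l ∈ Finset.Ioc (k-2) k, f l * g l = 0 := by
      apply Finset.sum_eq_zero
      intro l hl
      simp only [Finset.mem_Ioc] at hl
      have : k - 1 - l = 0 := by omega
      simp [hf, this]
    rw [this, add_zero]
  -- log of LHS
  have hlhs_pos : 0 < ∏ l ∈ Finset.Icc 1 (k - 2), ((p l : ℝ) ^ (2 ^ (k - 1 - l) - 1)) := by
    apply Finset.prod_pos
    intro l hl
    simp only [Finset.mem_Icc] at hl
    exact pow_pos (by exact_mod_cast (hprime l hl.1 (by omega)).pos) _
  have hloglhs : Real.log (∏ l ∈ Finset.Icc 1 (k - 2), ((p l : ℝ) ^ (2 ^ (k - 1 - l) - 1)))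
      = ∑ l ∈ Finset.Icc 1 (k-2), f l * g l := by
    rw [Real.log_prod]
    · apply Finset.sum_congr rfl
      intro l hl
      simp only [Finset.mem_Icc] at hl
      rw [Real.log_pow]
      simp only [hf, hg]
      have : ((2 ^ (k - 1 - l) - 1 : ℕ) : ℝ) = (2:ℝ) ^ (k - 1 - l) - 1 := by
        have h1 : 1 ≤ 2 ^ (k - 1 - l) := Nat.one_le_two_pow
        push_cast [h1]
        ring
      rw [this]
    · intro l hl
      simp only [Finset.mem_Icc] at hl
      exact ne_of_gt (pow_pos (by exact_mod_cast (hprime l hl.1 (by omega)).pos) _)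
  rw [← Real.log_le_log_iff hlhs_pos (Real.rpow_pos_of_pos (by exact_mod_cast hnpos) _),
      hloglhs, ← hsplit, Real.log_rpow (by exact_mod_cast hnpos)]
  exact key
end

section
/- Let 2 < p_1 < … < p_k be primes, n = p_1⋯p_k, and let A(n) denote the largest absolute value of the coefficients of Φ_n. If A(n) ≤ ∏_{l=1}^{k-2} p_l^{2^{k-1-l}-1} (the Bateman bound), then A(n) ≤ n^{2^{k-1}/k - 1}. -/
/-- `A n` is the largest absolute value of the coefficients of the `n`-th cyclotomic polynomial. -/
noncomputable def A (n : ℕ) : ℕ :=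
  (Polynomial.cyclotomic n ℤ).support.sup fun i => ((Polynomial.cyclotomic n ℤ).coeff i).natAbs

private lemma sum_pow_two_aux (t l : ℕ) :
    ∑ j ∈ Finset.Icc l (l + t), 2 ^ (l + t - j) + 1 = 2 ^ (t + 1) := by
  induction t with
  | zero => simp
  | succ t ih =>
    rw [show l + (t + 1) = (l + t) + 1 by ring, Finset.sum_Icc_succ_top (by omega)]
    have h2 : ∑ j ∈ Finset.Icc l (l + t), 2 ^ (l + t + 1 - j)
        = 2 * ∑ j ∈ Finset.Icc l (l + t), 2 ^ (l + t - j) := by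
      rw [Finset.mul_sum]
      refine Finset.sum_congr rfl fun j hj => ?_
      simp only [Finset.mem_Icc] at hj
      rw [show l + t + 1 - j = (l + t - j) + 1 by omega, pow_succ]
      ring
    have h3 : 2 ^ (t + 2) = 2 * 2 ^ (t + 1) := by ring
    simp only [Nat.sub_self, pow_zero]
    omega

private lemma sum_Icc_pow_two (m l : ℕ) (h : l ≤ m) :
    ∑ j ∈ Finset.Icc l m, 2 ^ (m - j) + 1 = 2 ^ (m - l + 1) := by
  obtain ⟨t, rfl⟩ : ∃ t, m = l + t := ⟨m - l, by omega⟩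
  rw [show l + t - l + 1 = t + 1 by omega]
  exact sum_pow_two_aux t l

private lemma sum_mul_pow_two (m : ℕ) :
    ∑ j ∈ Finset.Icc 1 m, j * 2 ^ (m - j) + (m + 2) = 2 ^ (m + 1) := by
  induction m with
  | zero => simp
  | succ m ih =>
    rw [Finset.sum_Icc_succ_top (by omega)]
    have h2 : ∑ j ∈ Finset.Icc 1 m, j * 2 ^ (m + 1 - j)
        = 2 * ∑ j ∈ Finset.Icc 1 m, j * 2 ^ (m - j) := by
      rw [Finset.mul_sum]
      refine Finset.sum_congr rfl fun j hj => ?_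
      simp only [Finset.mem_Icc] at hj
      rw [show m + 1 - j = (m - j) + 1 by omega, pow_succ]
      ring
    have h3 : 2 ^ (m + 2) = 2 * 2 ^ (m + 1) := by ring
    simp only [Nat.sub_self, pow_zero, Nat.add_sub_cancel] at *
    omega

private lemma triangle_swap (m : ℕ) (f : ℕ → ℕ → ℕ) :
    ∏ l ∈ Finset.Icc 1 m, ∏ j ∈ Finset.Icc l m, f l j
      = ∏ j ∈ Finset.Icc 1 m, ∏ l ∈ Finset.Icc 1 j, f l j :=
  Finset.prod_comm' (by intro x y; simp only [Finset.mem_Icc]; omega)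

private lemma partial_prod_pow_le (k j : ℕ) (p : ℕ → ℕ)
    (hmono : ∀ i j, 1 ≤ i → i ≤ j → j ≤ k → p i ≤ p j)
    (hj1 : 1 ≤ j) (hjk : j ≤ k) :
    (∏ l ∈ Finset.Icc 1 j, p l) ^ k ≤ (∏ i ∈ Finset.Icc 1 k, p i) ^ j := by
  have hsplit : (∏ l ∈ Finset.Icc 1 j, p l) * (∏ i ∈ Finset.Ioc j k, p i)
      = ∏ i ∈ Finset.Icc 1 k, p i := by
    rw [show Finset.Icc 1 j = Finset.Ioc 0 j from Finset.Icc_add_one_left_eq_Ioc 0 j,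
      show Finset.Icc 1 k = Finset.Ioc 0 k from Finset.Icc_add_one_left_eq_Ioc 0 k]
    exact Finset.prod_Ioc_consecutive _ (Nat.zero_le j) hjk
  set P := ∏ l ∈ Finset.Icc 1 j, p l with hP
  set Q := ∏ i ∈ Finset.Ioc j k, p i with hQ
  have hPQ : P ^ (k - j) ≤ Q ^ j := by
    have h1 : P ^ (k - j) = ∏ i ∈ Finset.Ioc j k, P := by
      rw [Finset.prod_const, Nat.card_Ioc]
    have h2 : Q ^ j = ∏ i ∈ Finset.Ioc j k, p i ^ j := by
      rw [← Finset.prod_pow]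
    rw [h1, h2]
    refine Finset.prod_le_prod' fun i hi => ?_
    simp only [Finset.mem_Ioc] at hi
    calc P ≤ ∏ l ∈ Finset.Icc 1 j, p i := by
            refine Finset.prod_le_prod' fun l hl => ?_
            simp only [Finset.mem_Icc] at hl
            exact hmono l i hl.1 (by omega) hi.2
      _ = p i ^ j := by rw [Finset.prod_const, Nat.card_Icc, Nat.add_sub_cancel]
  calc (∏ l ∈ Finset.Icc 1 j, p l) ^ k = P ^ j * P ^ (k - j) := by
        rw [← pow_add, Nat.add_sub_cancel' hjk]
    _ ≤ P ^ j * Q ^ j := Nat.mul_le_mul_left _ hPQ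
    _ = (P * Q) ^ j := (mul_pow P Q j).symm
    _ = (∏ i ∈ Finset.Icc 1 k, p i) ^ j := by rw [hsplit]

private lemma nat_key (k : ℕ) (hk : 2 ≤ k) (p : ℕ → ℕ)
    (hmono : ∀ i j, 1 ≤ i → i ≤ j → j ≤ k → p i ≤ p j) :
    (∏ l ∈ Finset.Icc 1 (k - 2), p l ^ (2 ^ (k - 1 - l) - 1)) ^ k
      ≤ (∏ i ∈ Finset.Icc 1 k, p i) ^ (2 ^ (k - 1) - k) := by
  set m := k - 2 with hm
  set n := ∏ i ∈ Finset.Icc 1 k, p i with hn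
  have hX : ∏ l ∈ Finset.Icc 1 m, p l ^ (2 ^ (k - 1 - l) - 1)
      = ∏ j ∈ Finset.Icc 1 m, (∏ l ∈ Finset.Icc 1 j, p l) ^ (2 ^ (m - j)) := by
    have step1 : ∏ l ∈ Finset.Icc 1 m, p l ^ (2 ^ (k - 1 - l) - 1)
        = ∏ l ∈ Finset.Icc 1 m, ∏ j ∈ Finset.Icc l m, p l ^ (2 ^ (m - j)) := by
      refine Finset.prod_congr rfl fun l hl => ?_
      simp only [Finset.mem_Icc] at hl
      rw [Finset.prod_pow_eq_pow_sum]
      congr 1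
      have := sum_Icc_pow_two m l hl.2
      have h2 : k - 1 - l = m - l + 1 := by omega
      rw [h2]
      omega
    rw [step1, triangle_swap]
    exact Finset.prod_congr rfl fun j _ => Finset.prod_pow _ _ _
  rw [hX, ← Finset.prod_pow]
  calc ∏ j ∈ Finset.Icc 1 m, ((∏ l ∈ Finset.Icc 1 j, p l) ^ 2 ^ (m - j)) ^ k
      = ∏ j ∈ Finset.Icc 1 m, ((∏ l ∈ Finset.Icc 1 j, p l) ^ k) ^ 2 ^ (m - j) := by
        exact Finset.prod_congr rfl fun j _ => pow_right_comm _ _ _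
    _ ≤ ∏ j ∈ Finset.Icc 1 m, (n ^ j) ^ 2 ^ (m - j) := by
        refine Finset.prod_le_prod' fun j hj => ?_
        simp only [Finset.mem_Icc] at hj
        exact Nat.pow_le_pow_left
          (partial_prod_pow_le k j p hmono hj.1 (by omega)) _
    _ = ∏ j ∈ Finset.Icc 1 m, n ^ (j * 2 ^ (m - j)) := by
        exact Finset.prod_congr rfl fun j _ => (pow_mul n j _).symm
    _ = n ^ (∑ j ∈ Finset.Icc 1 m, j * 2 ^ (m - j)) := Finset.prod_pow_eq_pow_sum _ _ _
    _ = n ^ (2 ^ (k - 1) - k) := by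
        congr 1
        have := sum_mul_pow_two m
        have h2 : m + 1 = k - 1 := by omega
        rw [h2] at this
        omega

theorem A_le_rpow_of_bateman (k : ℕ) (hk : 2 ≤ k) (p : ℕ → ℕ)
    (hprime : ∀ i, 1 ≤ i → i ≤ k → (p i).Prime)
    (h2 : 2 < p 1)
    (hmono : ∀ i j, 1 ≤ i → i < j → j ≤ k → p i < p j)
    (n : ℕ) (hn : n = ∏ i ∈ Finset.Icc 1 k, p i)
    (hbateman : (A n : ℝ) ≤ ∏ l ∈ Finset.Icc 1 (k - 2), ((p l : ℝ) ^ (2 ^ (k - 1 - l) - 1))) :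
    (A n : ℝ) ≤ (n : ℝ) ^ ((2 ^ (k - 1) : ℝ) / k - 1) := by
  have hmono' : ∀ i j, 1 ≤ i → i ≤ j → j ≤ k → p i ≤ p j := by
    intro i j hi hij hjk
    rcases eq_or_lt_of_le hij with rfl | h
    · exact le_rfl
    · exact (hmono i j hi h hjk).le
  set X : ℕ := ∏ l ∈ Finset.Icc 1 (k - 2), p l ^ (2 ^ (k - 1 - l) - 1) with hXdef
  set M : ℕ := 2 ^ (k - 1) - k with hMdef
  have hkey : X ^ k ≤ n ^ M := by
    rw [hn]; exact nat_key k hk p hmono'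
  have hcast : (∏ l ∈ Finset.Icc 1 (k - 2), ((p l : ℝ) ^ (2 ^ (k - 1 - l) - 1))) = (X : ℝ) := by
    rw [hXdef]; push_cast; ring
  rw [hcast] at hbateman
  have hkM : k ≤ 2 ^ (k - 1) := by
    calc k = (k - 1) + 1 := by omega
      _ ≤ 2 ^ (k - 1) := Nat.succ_le_of_lt Nat.lt_two_pow_self
  have hk0 : (0 : ℝ) < k := by positivity
  have hexp : ((2 ^ (k - 1) : ℝ) / k - 1) = (M : ℝ) / k := by
    rw [hMdef]
    rw [Nat.cast_sub hkM]
    push_cast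
    field_simp
  rw [hexp]
  have hn1 : 1 ≤ n := by
    rw [hn]
    exact Finset.one_le_prod' fun i hi => by
      simp only [Finset.mem_Icc] at hi
      exact (hprime i hi.1 hi.2).one_lt.le
  have hnR : (0 : ℝ) ≤ (n : ℝ) := by positivity
  refine le_trans hbateman ?_
  have hpow : ((n : ℝ) ^ ((M : ℝ) / k)) ^ (k : ℕ) = ((n ^ M : ℕ) : ℝ) := by
    rw [← Real.rpow_natCast ((n : ℝ) ^ ((M : ℝ) / k)) k, ← Real.rpow_mul hnR,
      div_mul_cancel₀ _ (ne_of_gt hk0)]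
    rw [Real.rpow_natCast]
    push_cast
    ring
  have h1 : (X : ℝ) ^ (k : ℕ) ≤ ((n : ℝ) ^ ((M : ℝ) / k)) ^ (k : ℕ) := by
    rw [hpow]
    calc (X : ℝ) ^ (k : ℕ) = ((X ^ k : ℕ) : ℝ) := by push_cast; ring
      _ ≤ ((n ^ M : ℕ) : ℝ) := by exact_mod_cast hkey
  have := (pow_le_pow_iff_left₀ (by positivity) (by positivity) (by omega)).mp h1
  exact this
end

section
/- Let n = p_1 ⋯ p_k be a product of distinct odd primes with 2 < p_1 < … < p_k, and let a be an integer coprime to p_1⋯p_{k-1}. Setting ε = e^{2πi/(p_1⋯p_{k-1})}, one has |Φ_n(ε^a)| = p_k · ∏_{d ∣ n, d ≠ n, d ≠ n/p_k} |sin(a d π /(p_1⋯p_{k-1}))|^{μ(n/d)}. -/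
open Polynomial ArithmeticFunction Real
open scoped ArithmeticFunction.Moebius ArithmeticFunction.zeta

lemma aux_abs (θ : ℝ) : ‖Complex.exp (θ * Complex.I) - 1‖ = 2 * |Real.sin (θ/2)| := by
  have hc : Real.cos θ = 1 - 2 * Real.sin (θ/2)^2 := by
    have h1 := Real.cos_sq (θ/2)
    have h2 := Real.sin_sq_add_cos_sq (θ/2)
    have h3 : 2 * (θ/2) = θ := by ring
    rw [h3] at h1
    nlinarith
  have hexp : Complex.exp (θ * Complex.I) - 1 =
      (((Real.cos θ - 1 : ℝ)) : ℂ) + ((Real.sin θ : ℝ) : ℂ) * Complex.I := by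
    rw [Complex.exp_mul_I, ← Complex.ofReal_cos, ← Complex.ofReal_sin]
    push_cast; ring
  have hsq : ‖Complex.exp (θ * Complex.I) - 1‖ ^ 2 = (2 * |Real.sin (θ/2)|)^2 := by
    rw [Complex.sq_norm, hexp, Complex.normSq_add_mul_I]
    nlinarith [Real.sin_sq_add_cos_sq θ, sq_abs (Real.sin (θ/2))]
  have h1 : (0:ℝ) ≤ ‖Complex.exp (θ * Complex.I) - 1‖ := norm_nonneg _
  have h2 : (0:ℝ) ≤ 2 * |Real.sin (θ/2)| := by positivity
  nlinarith [hsq, h1, h2]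

lemma aux_sf (s : Finset ℕ) (f : ℕ → ℕ) (h : ∀ i ∈ s, (f i).Prime)
    (hinj : ∀ i ∈ s, ∀ j ∈ s, f i = f j → i = j) : Squarefree (∏ i ∈ s, f i) := by
  classical
  induction s using Finset.induction_on with
  | empty => simp
  | @insert a s ha ih =>
    rw [Finset.prod_insert ha]
    have hpa := h a (Finset.mem_insert_self a s)
    have hcop : Nat.Coprime (f a) (∏ i ∈ s, f i) := by
      apply Nat.Coprime.prod_right
      intro j hj
      refine (Nat.coprime_primes hpa (h j (Finset.mem_insert_of_mem hj))).mpr ?_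
      intro he
      exact ha ((hinj a (Finset.mem_insert_self a s) j (Finset.mem_insert_of_mem hj) he) ▸ hj)
    exact (Nat.squarefree_mul hcop).mpr ⟨hpa.squarefree,
      ih (fun i hi => h i (Finset.mem_insert_of_mem hi))
        (fun i hi j hj he => hinj i (Finset.mem_insert_of_mem hi) j (Finset.mem_insert_of_mem hj) he)⟩

lemma aux_stepA (n : ℕ) (hn0 : n ≠ 0) (hsq : Squarefree n) :
    cyclotomic n ℂ *
      ∏ d ∈ n.divisors.filter (fun d => μ (n / d) = -1), (X ^ d - 1) =
      ∏ d ∈ n.divisors.filter (fun d => μ (n / d) = 1), (X ^ d - 1) := by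
  classical
  set A := algebraMap ℂ[X] (RatFunc ℂ)
  have hA := cyclotomic_eq_prod_X_pow_sub_one_pow_moebius (n := n) ℂ
  rw [Nat.prod_divisorsAntidiagonal' (f := fun i j => A (X ^ j - 1) ^ μ i)] at hA
  have hinj : Function.Injective A := IsFractionRing.injective ℂ[X] (RatFunc ℂ)
  have hne : ∀ d ∈ n.divisors, A (X ^ d - 1) ≠ 0 := by
    intro d hd
    have hd0 : 0 < d := Nat.pos_of_mem_divisors hd
    have : (X ^ d - 1 : ℂ[X]) ≠ 0 := by
      simpa using X_pow_sub_C_ne_zero hd0 (1 : ℂ)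
    exact (map_ne_zero_iff A hinj).mpr this
  have hpm : ∀ d ∈ n.divisors, μ (n / d) = 1 ∨ μ (n / d) = -1 := by
    intro d hd
    have hdvd : (n / d) ∣ n := Nat.div_dvd_of_dvd (Nat.dvd_of_mem_divisors hd)
    have hsqd : Squarefree (n / d) := hsq.squarefree_of_dvd hdvd
    have h2 := moebius_sq_eq_one_of_squarefree hsqd
    have : IsUnit (μ (n/d)) := IsUnit.of_mul_eq_one _ (by nlinarith [h2])
    exact Int.isUnit_iff.mp this
  have hsplit : n.divisors = n.divisors.filter (fun d => μ (n / d) = 1) ∪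
      n.divisors.filter (fun d => μ (n / d) = -1) := by
    ext d
    simp only [Finset.mem_union, Finset.mem_filter]
    constructor
    · intro hd; rcases hpm d hd with h | h
      · exact Or.inl ⟨hd, h⟩
      · exact Or.inr ⟨hd, h⟩
    · rintro (⟨hd, -⟩ | ⟨hd, -⟩) <;> exact hd
  have hdisj : Disjoint (n.divisors.filter (fun d => μ (n / d) = 1))
      (n.divisors.filter (fun d => μ (n / d) = -1)) := by
    rw [Finset.disjoint_filter]
    intro d _ h1 h2
    omega
  rw [hsplit, Finset.prod_union hdisj] at hA
  have e1 : ∏ d ∈ n.divisors.filter (fun d => μ (n / d) = 1), A (X ^ d - 1) ^ μ (n / d) =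
      ∏ d ∈ n.divisors.filter (fun d => μ (n / d) = 1), A (X ^ d - 1) := by
    refine Finset.prod_congr rfl fun d hd => ?_
    rw [(Finset.mem_filter.mp hd).2, zpow_one]
  have e2 : ∏ d ∈ n.divisors.filter (fun d => μ (n / d) = -1), A (X ^ d - 1) ^ μ (n / d) =
      (∏ d ∈ n.divisors.filter (fun d => μ (n / d) = -1), A (X ^ d - 1))⁻¹ := by
    rw [← Finset.prod_inv_distrib]
    refine Finset.prod_congr rfl fun d hd => ?_
    rw [(Finset.mem_filter.mp hd).2, zpow_neg, zpow_one]
  rw [e1, e2] at hA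
  have hmne : (∏ d ∈ n.divisors.filter (fun d => μ (n / d) = -1), A (X ^ d - 1)) ≠ 0 :=
    Finset.prod_ne_zero_iff.mpr fun d hd => hne d (Finset.mem_filter.mp hd).1
  apply hinj
  rw [map_mul, map_prod, map_prod, hA]
  field_simp

theorem abs_cyclotomic_eval_root_of_unity (k : ℕ) (hk : 1 ≤ k) (p : ℕ → ℕ)
    (hprime : ∀ i, 1 ≤ i → i ≤ k → (p i).Prime)
    (h2 : 2 < p 1)
    (hmono : ∀ i j, 1 ≤ i → i < j → j ≤ k → p i < p j)
    (n m : ℕ) (hn : n = ∏ i ∈ Finset.Icc 1 k, p i) (hm : m = ∏ i ∈ Finset.Icc 1 (k - 1), p i)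
    (a : ℤ) (ha : IsCoprime a (m : ℤ))
    (ε : ℂ) (hε : ε = Complex.exp (2 * Real.pi * Complex.I / m)) :
    ‖(Polynomial.cyclotomic n ℂ).eval (ε ^ a)‖ =
      (p k : ℝ) * ∏ d ∈ n.divisors \ {n, n / p k},
        (|Real.sin ((a : ℝ) * d * Real.pi / m)| ^ (ArithmeticFunction.moebius (n / d) : ℤ)) := by
  classical
  have hP : (p k).Prime := hprime k hk le_rfl
  have hnm : n = m * p k := by
    have h1 : k - 1 + 1 = k := Nat.succ_pred_eq_of_pos hk
    rw [hn, hm, ← h1, Finset.prod_Icc_succ_top (by omega), h1]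
  have hm0 : 0 < m := by
    rw [hm]; apply Finset.prod_pos; intro i hi
    obtain ⟨h1, hi2⟩ := Finset.mem_Icc.mp hi
    exact (hprime i h1 (le_trans hi2 (Nat.sub_le k 1))).pos
  have hmC : (m : ℂ) ≠ 0 := by exact_mod_cast hm0.ne'
  have hmR : (m : ℝ) ≠ 0 := by exact_mod_cast hm0.ne'
  have hn0 : n ≠ 0 := by rw [hnm]; exact Nat.mul_ne_zero hm0.ne' hP.pos.ne'
  have hnm' : n / p k = m := by rw [hnm]; exact Nat.mul_div_cancel m hP.pos
  have hsq : Squarefree n := by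
    rw [hn]; apply aux_sf
    · intro i hi; obtain ⟨h1, hi2⟩ := Finset.mem_Icc.mp hi; exact hprime i h1 hi2
    · intro i hi j hj he
      by_contra hne
      obtain ⟨hi1, hi2⟩ := Finset.mem_Icc.mp hi
      obtain ⟨hj1, hj2⟩ := Finset.mem_Icc.mp hj
      rcases Nat.lt_or_ge i j with h | h
      · have := hmono i j hi1 h hj2; omega
      · have hji : j < i := by omega
        have := hmono j i hj1 hji hi2; omega
  have hn1 : n ≠ 1 := by
    intro h
    rw [h] at hnm
    have := hP.one_lt
    nlinarith [hm0]
  -- z and its powers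
  set z := ε ^ a with hz
  have hε0 : ε ≠ 0 := by rw [hε]; exact Complex.exp_ne_zero _
  have hz_pow : ∀ d : ℕ, z ^ d = Complex.exp (((2 * π * a * d / m : ℝ) : ℂ) * Complex.I) := by
    intro d
    rw [hz, hε, ← Complex.exp_int_mul, ← Complex.exp_nat_mul]
    congr 1
    push_cast
    field_simp
  have hzm : z ^ m = 1 := by
    rw [hz_pow m]
    have harg : (((2 * π * a * m / m : ℝ)) : ℂ) * Complex.I = a * (2 * π * Complex.I) := by
      push_cast
      field_simp
    rw [harg, Complex.exp_int_mul_two_pi_mul_I]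
  set s : ℕ → ℝ := fun d => |Real.sin ((a : ℝ) * d * π / m)| with hs
  have habs : ∀ d : ℕ, ‖z ^ d - 1‖ = 2 * s d := by
    intro d
    rw [hz_pow d, aux_abs]
    have : (2 * π * a * d / m) / 2 = (a : ℝ) * d * π / m := by ring
    rw [this]
  -- divisor structure
  have hdm : ∀ d ∈ n.divisors, m ∣ d → d = m ∨ d = n := by
    intro d hd hmd
    obtain ⟨e, rfl⟩ := hmd
    have hdn : m * e ∣ m * p k := hnm ▸ Nat.dvd_of_mem_divisors hd
    have he : e ∣ p k := (mul_dvd_mul_iff_left hm0.ne').mp hdn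
    rcases (Nat.Prime.eq_one_or_self_of_dvd hP e he) with h | h
    · left; rw [h, mul_one]
    · right; rw [h, ← hnm]
  have hsin : ∀ d ∈ n.divisors, d ≠ n → d ≠ m → 0 < s d := by
    intro d hd hdn hdm'
    rw [hs]
    simp only []
    apply abs_pos.mpr
    intro hzero
    obtain ⟨j, hj⟩ := Real.sin_eq_zero_iff.mp hzero
    have hπ : (π : ℝ) ≠ 0 := Real.pi_ne_zero
    have hcast : ((a * d : ℤ) : ℝ) = ((j * m : ℤ) : ℝ) := by
      push_cast
      field_simp at hj
      have hj2 : ((a:ℝ) * d) * π = ((j:ℝ) * m) * π := by rw [hj]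
      exact mul_right_cancel₀ hπ hj2
    have hzint : (a * d : ℤ) = j * m := by exact_mod_cast hcast
    have hmdvd : (m : ℤ) ∣ a * d := ⟨j, by linarith [hzint]⟩
    have hmd2 : (m : ℤ) ∣ (d : ℤ) := (ha.symm).dvd_of_dvd_mul_left hmdvd
    have : m ∣ d := by exact_mod_cast hmd2
    rcases hdm d hd this with h | h
    · exact hdm' h
    · exact hdn h
  -- mu values
  have hpm : ∀ d ∈ n.divisors, μ (n / d) = 1 ∨ μ (n / d) = -1 := by
    intro d hd
    have hdvd : (n / d) ∣ n := Nat.div_dvd_of_dvd (Nat.dvd_of_mem_divisors hd)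
    have h2' := moebius_sq_eq_one_of_squarefree (hsq.squarefree_of_dvd hdvd)
    exact Int.isUnit_iff.mp (IsUnit.of_mul_eq_one _ (by nlinarith [h2']))
  set Dp := n.divisors.filter (fun d => μ (n / d) = 1) with hDp
  set Dm := n.divisors.filter (fun d => μ (n / d) = -1) with hDm
  have hmun : μ (n / n) = 1 := by rw [Nat.div_self (Nat.pos_of_ne_zero hn0)]; exact moebius_apply_one
  have hmum : μ (n / m) = -1 := by
    rw [hnm, Nat.mul_div_cancel_left _ hm0]; exact moebius_apply_prime hP
  have hnDp : n ∈ Dp := Finset.mem_filter.mpr ⟨Nat.mem_divisors_self n hn0, hmun⟩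
  have hmDm : m ∈ Dm := Finset.mem_filter.mpr
    ⟨Nat.mem_divisors.mpr ⟨⟨p k, hnm⟩, hn0⟩, hmum⟩
  have hmn : m ≠ n := by
    intro h
    rw [← h] at hnm
    nlinarith [hP.one_lt, hm0]
  -- polynomial manipulation
  have hpoly := aux_stepA n hn0 hsq
  rw [← hDp, ← hDm, ← Finset.mul_prod_erase _ _ hmDm, ← Finset.mul_prod_erase _ _ hnDp] at hpoly
  have hgeom : (X ^ n - 1 : ℂ[X]) = (∑ j ∈ Finset.range (p k), (X ^ m) ^ j) * (X ^ m - 1) := by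
    rw [geom_sum_mul, ← pow_mul, ← hnm]
  rw [hgeom] at hpoly
  have hXm : (X ^ m - 1 : ℂ[X]) ≠ 0 := by simpa using X_pow_sub_C_ne_zero hm0 (1 : ℂ)
  have hpoly2 : cyclotomic n ℂ * ∏ d ∈ Dm.erase m, (X ^ d - 1) =
      (∑ j ∈ Finset.range (p k), (X ^ m) ^ j) * ∏ d ∈ Dp.erase n, (X ^ d - 1) := by
    apply mul_left_cancel₀ hXm
    linear_combination hpoly
  -- evaluate at z
  have hev := congrArg (eval z) hpoly2
  simp only [eval_mul, eval_prod, eval_finset_sum, eval_pow, eval_X, eval_sub, eval_one] at hev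
  rw [hzm] at hev
  simp only [one_pow, Finset.sum_const, Finset.card_range, nsmul_eq_mul, mul_one] at hev
  -- take abs
  have habs_eq := congrArg norm hev
  rw [norm_mul, norm_mul, norm_prod, norm_prod, Complex.norm_natCast] at habs_eq
  have hEm : ∀ d ∈ Dm.erase m, d ∈ n.divisors ∧ d ≠ n ∧ d ≠ m := by
    intro d hd
    obtain ⟨hne, hdm'⟩ := Finset.mem_erase.mp hd
    obtain ⟨hdv, hmu⟩ := Finset.mem_filter.mp hdm'
    refine ⟨hdv, ?_, hne⟩
    intro h; rw [h, hmun] at hmu; omega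
  have hEp : ∀ d ∈ Dp.erase n, d ∈ n.divisors ∧ d ≠ n ∧ d ≠ m := by
    intro d hd
    obtain ⟨hne, hdp'⟩ := Finset.mem_erase.mp hd
    obtain ⟨hdv, hmu⟩ := Finset.mem_filter.mp hdp'
    refine ⟨hdv, hne, ?_⟩
    intro h; rw [h, hmum] at hmu; omega
  rw [Finset.prod_congr rfl (fun d _ => habs d), Finset.prod_congr rfl (fun d _ => habs d)]
    at habs_eq
  -- card equality
  have hsum : (∑ d ∈ n.divisors, μ (n / d)) = 0 := by
    rw [Nat.sum_div_divisors]
    have h1 : (μ * (ζ : ArithmeticFunction ℤ)) n = (1 : ArithmeticFunction ℤ) n := by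
      rw [moebius_mul_coe_zeta]
    rw [coe_mul_zeta_apply] at h1
    rw [h1, one_apply_ne hn1]
  have hsplit : n.divisors = Dp ∪ Dm := by
    ext d
    simp only [hDp, hDm, Finset.mem_union, Finset.mem_filter]
    constructor
    · intro hd; rcases hpm d hd with h | h
      · exact Or.inl ⟨hd, h⟩
      · exact Or.inr ⟨hd, h⟩
    · rintro (⟨hd, -⟩ | ⟨hd, -⟩) <;> exact hd
  have hdisj : Disjoint Dp Dm := by
    rw [hDp, hDm, Finset.disjoint_filter]
    intro d _ h1' h2'
    omega
  have hcardpm : Dp.card = Dm.card := by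
    have h1 : (∑ d ∈ Dp, μ (n / d)) = (Dp.card : ℤ) := by
      rw [Finset.sum_congr rfl (fun d hd => (Finset.mem_filter.mp hd).2)]
      simp [hDp]
    have h2' : (∑ d ∈ Dm, μ (n / d)) = -(Dm.card : ℤ) := by
      rw [Finset.sum_congr rfl (fun d hd => (Finset.mem_filter.mp hd).2)]
      simp [hDm]
    rw [hsplit, Finset.sum_union hdisj, h1, h2'] at hsum
    omega
  have hcard : (Dp.erase n).card = (Dm.erase m).card := by
    rw [Finset.card_erase_of_mem hnDp, Finset.card_erase_of_mem hmDm, hcardpm]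
  -- target set equals union of erasures
  have hT : n.divisors \ {n, m} = (Dp.erase n) ∪ (Dm.erase m) := by
    ext d
    simp only [Finset.mem_sdiff, Finset.mem_insert, Finset.mem_singleton, Finset.mem_union,
      Finset.mem_erase, hDp, hDm, Finset.mem_filter]
    constructor
    · rintro ⟨hd, hne⟩
      push_neg at hne
      rcases hpm d hd with h | h
      · exact Or.inl ⟨hne.1, hd, h⟩
      · exact Or.inr ⟨hne.2, hd, h⟩
    · rintro (⟨hne, hd, hmu⟩ | ⟨hne, hd, hmu⟩)
      · refine ⟨hd, ?_⟩
        push_neg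
        refine ⟨hne, ?_⟩
        intro h; rw [h, hmum] at hmu; omega
      · refine ⟨hd, ?_⟩
        push_neg
        constructor
        · intro h; rw [h, hmun] at hmu; omega
        · exact hne
  have hdisj2 : Disjoint (Dp.erase n) (Dm.erase m) :=
    (hdisj.mono (Finset.erase_subset _ _) (Finset.erase_subset _ _))
  -- final real computation
  rw [hnm', hT, Finset.prod_union hdisj2]
  have ePp : (∏ d ∈ Dp.erase n, s d ^ (μ (n / d) : ℤ)) = ∏ d ∈ Dp.erase n, s d := by
    refine Finset.prod_congr rfl fun d hd => ?_
    rw [(Finset.mem_filter.mp (Finset.mem_of_mem_erase hd)).2, zpow_one]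
  have ePm : (∏ d ∈ Dm.erase m, s d ^ (μ (n / d) : ℤ)) = (∏ d ∈ Dm.erase m, s d)⁻¹ := by
    rw [← Finset.prod_inv_distrib]
    refine Finset.prod_congr rfl fun d hd => ?_
    rw [(Finset.mem_filter.mp (Finset.mem_of_mem_erase hd)).2, zpow_neg, zpow_one]
  rw [ePp, ePm]
  have hSm : (0 : ℝ) < ∏ d ∈ Dm.erase m, s d := by
    apply Finset.prod_pos
    intro d hd
    obtain ⟨hdv, hdn, hdm'⟩ := hEm d hd
    exact hsin d hdv hdn hdm'
  rw [Finset.prod_mul_distrib, Finset.prod_mul_distrib, Finset.prod_const, Finset.prod_const,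
    hcard] at habs_eq
  have h2c : (0 : ℝ) < (2 : ℝ) ^ (Dm.erase m).card := by positivity
  have h2c0 : ((2:ℝ) ^ (Dm.erase m).card) ≠ 0 := by positivity
  have hkey : ‖(cyclotomic n ℂ).eval z‖ * (∏ d ∈ Dm.erase m, s d) =
      (p k : ℝ) * ∏ d ∈ Dp.erase n, s d := by
    apply mul_left_cancel₀ h2c0
    linear_combination habs_eq
  field_simp
  linear_combination hkey
end

section
/- Let M be a positive integer and h(x) ∈ ℤ[x] + (1/2)x^d a polynomial of degree d with leading coefficient of the form b + 1/2 for some integer b, taking half-integer or integer values at integers in such a way that h(p)π/M is well defined. If M(p) = ∏_{s=1}^{N}(p + 2j_s) is a monic degree-N polynomial with N = d + 1, then |sin(h(p)π/M(p))| = Θ(1/p) as p → ∞; i.e., there exist constants c, C > 0 depending only on the data such that c/p ≤ |sin(h(p)π/M(p))| ≤ C/p for all large p. -/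
open Filter Polynomial Real

theorem abs_sin_theta_one_div_p (d : ℕ) (h : Polynomial ℝ) (b : ℤ)
    (hdeg : h.degree = d) (hlead : h.leadingCoeff = (b : ℝ) + 1 / 2)
    (N : ℕ) (hN : N = d + 1) (j : Fin N → ℤ) :
    ∃ c C : ℝ, 0 < c ∧ 0 < C ∧ ∃ p₀ : ℝ, ∀ p : ℝ, p₀ ≤ p →
      c / p ≤ |Real.sin (h.eval p * Real.pi / ∏ s, (p + 2 * j s))| ∧
      |Real.sin (h.eval p * Real.pi / ∏ s, (p + 2 * j s))| ≤ C / p := by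
  set Q : Polynomial ℝ := ∏ s : Fin N, (X + C ((2 * j s : ℤ) : ℝ)) with hQdef
  have hQmonic : Q.Monic := monic_prod_of_monic _ _ fun s _ => monic_X_add_C _
  have hQne : Q ≠ 0 := hQmonic.ne_zero
  have hQnat : Q.natDegree = N := by
    rw [hQdef, natDegree_prod _ _ fun s _ => (monic_X_add_C ((2 * j s : ℤ) : ℝ)).ne_zero]
    simp only [natDegree_X_add_C]
    simp
  have hQeval : ∀ p : ℝ, Q.eval p = ∏ s, (p + 2 * j s) := by
    intro p
    rw [hQdef, eval_prod]
    refine Finset.prod_congr rfl fun s _ => ?_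
    push_cast [eval_add, eval_X, eval_C]
    ring
  have hhne : h ≠ 0 := fun hh => by simp [hh] at hdeg
  have hPdeg : (h * X).degree = Q.degree := by
    rw [degree_mul, hdeg, degree_X, degree_eq_natDegree hQne, hQnat, hN]
    norm_cast
  -- main limit: (h·X)(p)/Q(p) → (b+1/2)
  have T1 : Tendsto (fun p => (h * X).eval p / Q.eval p) atTop
      (nhds ((b : ℝ) + 1 / 2)) := by
    have := Polynomial.div_tendsto_leadingCoeff_div_of_degree_eq (h * X) Q hPdeg
    rwa [leadingCoeff_mul, leadingCoeff_X, hlead, hQmonic.leadingCoeff, mul_one, div_one]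
      at this
  set g : ℝ → ℝ := fun p => h.eval p * Real.pi / Q.eval p with hgdef
  set L : ℝ := ((b : ℝ) + 1 / 2) * Real.pi with hLdef
  have hb : ((b : ℝ) + 1 / 2) ≠ 0 := by
    intro hb0
    have : (2 * b + 1 : ℝ) = 0 := by linarith
    have : (2 * b + 1 : ℤ) = 0 := by exact_mod_cast this
    omega
  have hL : L ≠ 0 := mul_ne_zero hb Real.pi_ne_zero
  have T2 : Tendsto (fun p => p * g p) atTop (nhds L) := by
    have := T1.mul_const Real.pi
    refine this.congr' ?_
    filter_upwards [eventually_ne_atTop 0] with p hp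
    simp only [hgdef, eval_mul, eval_X]
    ring
  have T3 : Tendsto g atTop (nhds 0) := by
    have := T2.mul tendsto_inv_atTop_zero
    rw [mul_zero] at this
    refine this.congr' ?_
    filter_upwards [eventually_ne_atTop 0] with p hp
    field_simp
  have T4 : ∀ᶠ p in atTop, g p ≠ 0 := by
    filter_upwards [T2.eventually_ne hL, eventually_ne_atTop 0] with p h1 h2
    intro hg0
    rw [hg0, mul_zero] at h1
    exact h1 rfl
  have sinratio : Tendsto (fun x : ℝ => Real.sin x / x) (nhdsWithin 0 {0}ᶜ) (nhds 1) := by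
    have := (Real.hasDerivAt_sin 0)
    rw [Real.cos_zero, hasDerivAt_iff_tendsto_slope] at this
    refine this.congr fun x => ?_
    simp [slope_def_field, div_eq_div_iff]
  have Tg : Tendsto g atTop (nhdsWithin 0 {0}ᶜ) :=
    tendsto_nhdsWithin_of_tendsto_nhds_of_eventually_within g T3 T4
  have T5 : Tendsto (fun p => p * Real.sin (g p)) atTop (nhds L) := by
    have := T2.mul (sinratio.comp Tg)
    rw [mul_one] at this
    refine this.congr' ?_
    filter_upwards [T4] with p hp
    simp only [Function.comp]
    field_simp
  have Tabs : Tendsto (fun p => |p * Real.sin (g p)|) atTop (nhds |L|) := T5.abs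
  have hLpos : 0 < |L| := abs_pos.mpr hL
  refine ⟨|L| / 2, 2 * |L|, by linarith, by linarith, ?_⟩
  have hev : ∀ᶠ p in atTop, |L| / 2 ≤ |p * Real.sin (g p)| ∧
      |p * Real.sin (g p)| ≤ 2 * |L| := by
    have h1 : ∀ᶠ p in atTop, |p * Real.sin (g p)| ∈ Set.Ioo (|L| / 2) (2 * |L|) := by
      refine Tabs.eventually (Ioo_mem_nhds (by linarith) (by linarith))
    filter_upwards [h1] with p hp
    exact ⟨le_of_lt hp.1, le_of_lt hp.2⟩
  obtain ⟨p₀, hp₀⟩ := (hev.and (eventually_gt_atTop 0)).exists_forall_of_atTop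
  refine ⟨p₀, fun p hp => ?_⟩
  obtain ⟨⟨hlo, hhi⟩, hppos⟩ := hp₀ p hp
  have habs : |p * Real.sin (g p)| = p * |Real.sin (g p)| := by
    rw [abs_mul, abs_of_pos hppos]
  rw [habs] at hlo hhi
  have hval : Real.sin (h.eval p * Real.pi / ∏ s, (p + 2 * j s)) = Real.sin (g p) := by
    rw [hgdef]; simp only [hQeval]
  rw [hval]
  constructor
  · rw [div_le_iff₀ hppos]; linarith
  · rw [le_div_iff₀ hppos]; linarith
end
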